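/- Let (Ω, 𝒜, ℙ) be a probability space, let n be a positive integer, and let X_1, …, X_n be independent real-valued random variables with 0 ≤ X_i ≤ M almost surely for a constant M > 0. Set X = X_1 + ⋯ + X_n. Then for every ε > 0, ℙ(X ≤ (1 − ε)·𝔼[X]) ≤ exp(−2ε²·(𝔼[X])² / (n·M²)). -/

import Mathlib

open MeasureTheory ProbabilityTheory

/-- Key analytic inequality behind Hoeffding's lemma. -/
lemma hoeffding_key_ineq (p : ℝ) (hp0 : 0 ≤ p) (hp1 : p ≤ 1) (h : ℝ) :
    1 - p + p * Real.exp h ≤ Real.exp (p * h + h ^ 2 / 8) := by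
  have hD : ∀ x : ℝ, 0 < 1 - p + p * Real.exp x := by
    intro x
    rcases eq_or_lt_of_le hp0 with h0 | h0
    · simp [← h0]
    · nlinarith [Real.exp_pos x]
  rw [← Real.log_le_iff_le_exp (hD h)]
  set g : ℝ → ℝ := fun x => p * x + x ^ 2 / 8 - Real.log (1 - p + p * Real.exp x) with hg
  set g' : ℝ → ℝ := fun x => p + x / 4 - p * Real.exp x / (1 - p + p * Real.exp x) with hg'
  have hDeriv : ∀ x, HasDerivAt g (g' x) x := by
    intro x
    have hd : HasDerivAt (fun x => 1 - p + p * Real.exp x) (p * Real.exp x) x :=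
      ((Real.hasDerivAt_exp x).const_mul p).const_add (1 - p)
    have hlog : HasDerivAt (fun x => Real.log (1 - p + p * Real.exp x))
        (p * Real.exp x / (1 - p + p * Real.exp x)) x := hd.log (hD x).ne'
    have h1 : HasDerivAt (fun x : ℝ => p * x + x ^ 2 / 8) (p + x / 4) x := by
      have := ((hasDerivAt_pow 2 x).div_const 8).const_add 0
      have h2 : HasDerivAt (fun x : ℝ => p * x) p x := by
        simpa using (hasDerivAt_id x).const_mul p
      have h3 : HasDerivAt (fun x : ℝ => x ^ 2 / 8) (x / 4) x := by
        have := (hasDerivAt_pow 2 x).div_const 8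
        exact this.congr_deriv (by norm_num; ring)
      exact h2.add h3
    exact h1.sub hlog
  have hDeriv' : ∀ x, HasDerivAt g'
      (1/4 - (p * Real.exp x * (1 - p)) / (1 - p + p * Real.exp x) ^ 2) x := by
    intro x
    have hu : HasDerivAt (fun x => p * Real.exp x) (p * Real.exp x) x :=
      (Real.hasDerivAt_exp x).const_mul p
    have hd : HasDerivAt (fun x => 1 - p + p * Real.exp x) (p * Real.exp x) x :=
      ((Real.hasDerivAt_exp x).const_mul p).const_add (1 - p)
    have hq : HasDerivAt (fun x => p * Real.exp x / (1 - p + p * Real.exp x))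
        ((p * Real.exp x * (1 - p + p * Real.exp x) -
          p * Real.exp x * (p * Real.exp x)) / (1 - p + p * Real.exp x) ^ 2) x :=
      hu.div hd (hD x).ne'
    have h1 : HasDerivAt (fun x : ℝ => p + x / 4) (1/4) x := by
      simpa using ((hasDerivAt_id x).div_const 4).const_add p
    have := h1.sub hq
    exact this.congr_deriv (by ring)
  have hg'' : ∀ x : ℝ, 0 ≤ 1/4 - (p * Real.exp x * (1 - p)) / (1 - p + p * Real.exp x) ^ 2 := by
    intro x
    have hx := hD x
    have he := Real.exp_pos x
    rw [sub_nonneg, div_le_iff₀ (by positivity)]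
    nlinarith [sq_nonneg ((1 - p) - p * Real.exp x)]
  have hmono : Monotone g' :=
    monotone_of_deriv_nonneg (fun x => (hDeriv' x).differentiableAt)
      (fun x => by rw [(hDeriv' x).deriv]; exact hg'' x)
  have hg'0 : g' 0 = 0 := by simp [hg']
  have hg0 : g 0 = 0 := by simp [hg]
  have hnonneg : 0 ≤ g h := by
    rcases le_total 0 h with hh | hh
    · have : MonotoneOn g (Set.Ici 0) := by
        refine monotoneOn_of_deriv_nonneg (convex_Ici 0)
          (fun x _ => (hDeriv x).differentiableAt.continuousAt.continuousWithinAt)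
          (fun x _ => (hDeriv x).differentiableAt.differentiableWithinAt) ?_
        intro x hx
        rw [(hDeriv x).deriv]
        rw [interior_Ici] at hx
        calc (0:ℝ) = g' 0 := hg'0.symm
          _ ≤ g' x := hmono (le_of_lt hx)
      have := this (Set.self_mem_Ici) (Set.mem_Ici.2 hh) hh
      linarith [hg0 ▸ this]
    · have : AntitoneOn g (Set.Iic 0) := by
        refine antitoneOn_of_deriv_nonpos (convex_Iic 0)
          (fun x _ => (hDeriv x).differentiableAt.continuousAt.continuousWithinAt)
          (fun x _ => (hDeriv x).differentiableAt.differentiableWithinAt) ?_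
        intro x hx
        rw [(hDeriv x).deriv]
        rw [interior_Iic] at hx
        calc g' x ≤ g' 0 := hmono (le_of_lt hx)
          _ = 0 := hg'0
      have := this (Set.mem_Iic.2 hh) Set.self_mem_Iic hh
      linarith [hg0 ▸ this]
  have : g h = p * h + h ^ 2 / 8 - Real.log (1 - p + p * Real.exp h) := rfl
  linarith [this ▸ hnonneg]

/-- Hoeffding's lemma. -/
lemma hoeffding_mgf_le {Ω : Type*} [MeasurableSpace Ω] (μ : Measure Ω) [IsProbabilityMeasure μ]
    {Y : Ω → ℝ} (hY : Measurable Y) (hint : Integrable Y μ) {a b : ℝ} (hab : a < b)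
    (hbd : ∀ᵐ ω ∂μ, Y ω ∈ Set.Icc a b) (t : ℝ) :
    mgf Y μ t ≤ Real.exp (t * (∫ ω, Y ω ∂μ) + t ^ 2 * (b - a) ^ 2 / 8) := by
  set m := ∫ ω, Y ω ∂μ with hm
  have hba : (0:ℝ) < b - a := by linarith
  have hma : a ≤ m := by
    have := integral_mono_ae (integrable_const a) hint (hbd.mono fun ω hω => hω.1)
    simpa using this
  have hmb : m ≤ b := by
    have := integral_mono_ae hint (integrable_const b) (hbd.mono fun ω hω => hω.2)
    simpa using this
  set c₁ := (Real.exp (t * b) - Real.exp (t * a)) / (b - a) with hc₁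
  set c₂ := (b * Real.exp (t * a) - a * Real.exp (t * b)) / (b - a) with hc₂
  -- pointwise bound
  have hpt : ∀ᵐ ω ∂μ, Real.exp (t * Y ω) ≤ c₁ * Y ω + c₂ := by
    refine hbd.mono fun ω hω => ?_
    obtain ⟨hya, hyb⟩ := hω
    set y := Y ω
    have hl : (0:ℝ) ≤ (b - y) / (b - a) := div_nonneg (by linarith) hba.le
    have hr : (0:ℝ) ≤ (y - a) / (b - a) := div_nonneg (by linarith) hba.le
    have hsum : (b - y) / (b - a) + (y - a) / (b - a) = 1 := by field_simp; ring
    have hcvx := convexOn_exp.2 (Set.mem_univ (t * a)) (Set.mem_univ (t * b)) hl hr hsum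
    simp only [smul_eq_mul] at hcvx
    have heq : (b - y) / (b - a) * (t * a) + (y - a) / (b - a) * (t * b) = t * y := by
      rw [div_mul_eq_mul_div, div_mul_eq_mul_div, ← add_div, div_eq_iff hba.ne']
      ring
    rw [heq] at hcvx
    calc Real.exp (t * y) ≤ (b - y) / (b - a) * Real.exp (t * a)
          + (y - a) / (b - a) * Real.exp (t * b) := hcvx
      _ = c₁ * y + c₂ := by
          rw [hc₁, hc₂]
          field_simp
          ring
  -- integrability of exp(t Y)
  have hintexp : Integrable (fun ω => Real.exp (t * Y ω)) μ := by
    refine Integrable.mono' (integrable_const (Real.exp (|t| * max |a| |b|)))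
      (hY.const_mul t).exp.aestronglyMeasurable ?_
    refine hbd.mono fun ω hω => ?_
    rw [Real.norm_eq_abs, abs_of_pos (Real.exp_pos _), Real.exp_le_exp]
    calc t * Y ω ≤ |t * Y ω| := le_abs_self _
      _ = |t| * |Y ω| := abs_mul _ _
      _ ≤ |t| * max |a| |b| := by
          refine mul_le_mul_of_nonneg_left ?_ (abs_nonneg t)
          exact abs_le_max_abs_abs hω.1 hω.2
  have hstep1 : mgf Y μ t ≤ c₁ * m + c₂ := by
    have := integral_mono_ae hintexp ((hint.const_mul c₁).add (integrable_const c₂)) hpt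
    rw [mgf]
    calc ∫ ω, Real.exp (t * Y ω) ∂μ ≤ ∫ ω, (c₁ * Y ω + c₂) ∂μ := this
      _ = c₁ * m + c₂ := by
          rw [integral_add (hint.const_mul c₁) (integrable_const c₂),
            integral_const_mul c₁ Y, integral_const]
          simp [hm]
  refine hstep1.trans ?_
  set p := (m - a) / (b - a) with hp
  have hp0 : 0 ≤ p := div_nonneg (by linarith) hba.le
  have hp1 : p ≤ 1 := by rw [hp, div_le_one hba]; linarith
  have hkey := hoeffding_key_ineq p hp0 hp1 (t * (b - a))
  have hexpb : Real.exp (t * b) = Real.exp (t * a) * Real.exp (t * (b - a)) := by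
    rw [← Real.exp_add]; ring_nf
  calc c₁ * m + c₂ = Real.exp (t * a) * (1 - p + p * Real.exp (t * (b - a))) := by
        rw [hc₁, hc₂, hexpb, hp]
        field_simp
        ring
    _ ≤ Real.exp (t * a) * Real.exp (p * (t * (b - a)) + (t * (b - a)) ^ 2 / 8) := by
        exact mul_le_mul_of_nonneg_left hkey (Real.exp_pos _).le
    _ = Real.exp (t * m + t ^ 2 * (b - a) ^ 2 / 8) := by
        rw [← Real.exp_add]
        congr 1
        rw [hp]
        field_simp
        ring

/-- lower-tail Hoeffding inequality, relative-deviation form: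
for independent random variables `X i ∈ [0, M]` a.s. with sum `X`, and every `ε > 0`,
`ℙ(X ≤ (1−ε)·𝔼[X]) ≤ exp(−2ε²·𝔼[X]² / (n·M²))`. -/
theorem hoeffding_lower_tail
    {Ω : Type*} [MeasurableSpace Ω] (μ : Measure Ω) [IsProbabilityMeasure μ]
    (n : ℕ) (hn : 0 < n) (M : ℝ) (hM : 0 < M) (X : Fin n → Ω → ℝ)
    (hmeas : ∀ i, Measurable (X i))
    (hindep : iIndepFun X μ)
    (hint : ∀ i, Integrable (X i) μ)
    (hbound : ∀ i, ∀ᵐ ω ∂μ, X i ω ∈ Set.Icc 0 M)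
    (ε : ℝ) (hε : 0 < ε) :
    (μ {ω | ∑ i, X i ω ≤ (1 - ε) * (∫ ω', (∑ i, X i ω') ∂μ)}).toReal ≤
      Real.exp (-(2 * ε ^ 2 * (∫ ω', (∑ i, X i ω') ∂μ) ^ 2) / (n * M ^ 2)) := by
  set m := ∫ ω', (∑ i, X i ω') ∂μ with hm
  have hnR : (0:ℝ) < n := Nat.cast_pos.mpr hn
  have hm0 : 0 ≤ m := by
    refine integral_nonneg_of_ae ?_
    have : ∀ᵐ ω ∂μ, ∀ i, X i ω ∈ Set.Icc 0 M := ae_all_iff.2 hbound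
    exact this.mono fun ω hω => Finset.sum_nonneg fun i _ => (hω i).1
  set s : ℝ := 4 * ε * m / (n * M ^ 2) with hs
  have hs0 : 0 ≤ s := by positivity
  set t : ℝ := -s with ht
  have ht0 : t ≤ 0 := neg_nonpos.2 hs0
  -- integrability of exp(t * X i)
  have hintexp : ∀ i, Integrable (fun ω => Real.exp (t * X i ω)) μ := by
    intro i
    refine Integrable.mono' (integrable_const (1:ℝ))
      ((hmeas i).const_mul t).exp.aestronglyMeasurable ?_
    refine (hbound i).mono fun ω hω => ?_
    rw [Real.norm_eq_abs, abs_of_pos (Real.exp_pos _)]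
    calc Real.exp (t * X i ω) ≤ Real.exp 0 := by
          rw [Real.exp_le_exp]
          exact mul_nonpos_of_nonpos_of_nonneg ht0 hω.1
      _ = 1 := Real.exp_zero
  have hintsum : Integrable (fun ω => Real.exp (t * (∑ i, X i) ω)) μ :=
    hindep.integrable_exp_mul_sum hmeas (fun i _ => hintexp i)
  -- Chernoff
  have hset : {ω | ∑ i, X i ω ≤ (1 - ε) * m} = {ω | (∑ i, X i) ω ≤ (1 - ε) * m} := by
    simp [Finset.sum_apply]
  have hchernoff := measure_le_le_exp_mul_mgf (μ := μ) (X := ∑ i, X i)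
    ((1 - ε) * m) ht0 hintsum
  rw [← hset] at hchernoff
  -- bound the mgf
  have hEi : m = ∑ i, ∫ ω, X i ω ∂μ := by
    rw [hm, integral_finset_sum _ (fun i _ => hint i)]
  have hmgf : mgf (∑ i, X i) μ t ≤ Real.exp (t * m + n * (t ^ 2 * M ^ 2 / 8)) := by
    rw [hindep.mgf_sum hmeas]
    calc ∏ i, mgf (X i) μ t
        ≤ ∏ i, Real.exp (t * (∫ ω, X i ω ∂μ) + t ^ 2 * (M - 0) ^ 2 / 8) := by
          refine Finset.prod_le_prod (fun i _ => mgf_nonneg) (fun i _ => ?_)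
          exact hoeffding_mgf_le μ (hmeas i) (hint i) hM (hbound i) t
      _ = Real.exp (∑ i, (t * (∫ ω, X i ω ∂μ) + t ^ 2 * (M - 0) ^ 2 / 8)) := by
          rw [Real.exp_sum]
      _ = Real.exp (t * m + n * (t ^ 2 * M ^ 2 / 8)) := by
          congr 1
          rw [Finset.sum_add_distrib, ← Finset.mul_sum, ← hEi]
          simp [Finset.sum_const, Finset.card_univ]
  calc (μ {ω | ∑ i, X i ω ≤ (1 - ε) * m}).toReal
      ≤ Real.exp (-t * ((1 - ε) * m)) * mgf (∑ i, X i) μ t := hchernoff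
    _ ≤ Real.exp (-t * ((1 - ε) * m)) * Real.exp (t * m + n * (t ^ 2 * M ^ 2 / 8)) := by
        exact mul_le_mul_of_nonneg_left hmgf (Real.exp_pos _).le
    _ = Real.exp (-t * ((1 - ε) * m) + (t * m + n * (t ^ 2 * M ^ 2 / 8))) := by
        rw [← Real.exp_add]
    _ ≤ Real.exp (-(2 * ε ^ 2 * m ^ 2) / (n * M ^ 2)) := by
        rw [Real.exp_le_exp, ht, hs]
        refine le_of_eq ?_
        have hn0 : (n:ℝ) ≠ 0 := hnR.ne'
        have hM0 : M ≠ 0 := hM.ne'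
        field_simp
        ring
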